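/- Let T_1, ..., T_n be finite multisets of vectors in Z^d with all entries nonnegative and bounded by Δ in absolute value. If the total sums of the elements of each multiset are all equal, i.e. Σ_{τ∈T_1} τ = ... = Σ_{τ∈T_n} τ, and this common sum is nonzero, then there exist nonempty submultisets S_i ⊆ T_i such that Σ_{s∈S_1} s = ... = Σ_{s∈S_n} s, and moreover the cardinality of each S_i can be bounded by a function of d and Δ alone (independent of n and of the sizes of the T_i). -/

import Mathlib

namespace Stmt0Aux

/-! ### Generic box / Higman machinery -/

section Boxes

variable {ι : Type*} [Fintype ι] [DecidableEq ι]

/-- box with corner `c` -/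
def box (c : ι → WithTop ℕ) : Set (ι → ℕ) := {x | ∀ f, (x f : WithTop ℕ) ≤ c f}

lemma box_inter (a b : ι → WithTop ℕ) : box a ∩ box b = box (a ⊓ b) := by
  ext x
  simp only [box, Set.mem_inter_iff, Set.mem_setOf_eq, Pi.inf_apply, le_inf_iff]
  exact ⟨fun ⟨h1, h2⟩ f => ⟨h1 f, h2 f⟩, fun h => ⟨fun f => (h f).1, fun f => (h f).2⟩⟩

lemma box_mono {a b : ι → WithTop ℕ} (h : a ≤ b) : box a ⊆ box b :=
  fun x hx f => le_trans (hx f) (h f)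

lemma mem_box_top (x : ι → ℕ) : x ∈ box (⊤ : ι → WithTop ℕ) := fun _ => le_top

/-- the set of count-vectors avoiding (not ≥) a single `g` is a finite union of boxes -/
lemma avoid_single (g : ι → ℕ) : ∃ C : Finset (ι → WithTop ℕ),
    {x : ι → ℕ | ¬ g ≤ x} = ⋃ c ∈ C, box c := by
  classical
  refine ⟨(Finset.univ.filter (fun f => 1 ≤ g f)).image
    (fun f => Function.update (⊤ : ι → WithTop ℕ) f ((g f - 1 : ℕ) : WithTop ℕ)), ?_⟩
  ext x
  simp only [Set.mem_setOf_eq, Set.mem_iUnion, Finset.mem_image, Finset.mem_filter,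
    Finset.mem_univ, true_and, exists_prop]
  constructor
  · intro hx
    have : ∃ f, x f < g f := by
      by_contra hc; push_neg at hc; exact hx (fun f => hc f)
    obtain ⟨f, hf⟩ := this
    refine ⟨_, ⟨f, by omega, rfl⟩, ?_⟩
    intro f'
    rcases eq_or_ne f' f with rfl | hne
    · rw [Function.update_self]
      have : x f' ≤ g f' - 1 := by omega
      exact_mod_cast this
    · simp [box, Function.update_of_ne hne]
  · rintro ⟨c, ⟨f, hgf, rfl⟩, hc⟩
    intro hle
    have h1 := hc f
    rw [Function.update_self] at h1
    have h2 : x f ≤ g f - 1 := by exact_mod_cast h1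
    have h4 : 1 ≤ g f := hgf
    have h5 : g f ≤ x f := hle f
    omega

lemma avoid_decomp (G : Finset (ι → ℕ)) : ∃ C : Finset (ι → WithTop ℕ),
    {x : ι → ℕ | ∀ g ∈ G, ¬ g ≤ x} = ⋃ c ∈ C, box c := by
  classical
  induction G using Finset.induction_on with
  | empty =>
    refine ⟨{⊤}, ?_⟩
    ext x
    simp [mem_box_top x]
  | @insert a G ha ih =>
    obtain ⟨C, hC⟩ := ih
    obtain ⟨Ca, hCa⟩ := avoid_single a
    refine ⟨(Ca ×ˢ C).image (fun p => p.1 ⊓ p.2), ?_⟩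
    have hsplit : {x : ι → ℕ | ∀ g ∈ insert a G, ¬ g ≤ x}
        = {x : ι → ℕ | ¬ a ≤ x} ∩ {x : ι → ℕ | ∀ g ∈ G, ¬ g ≤ x} := by
      ext x
      simp only [Set.mem_setOf_eq, Set.mem_inter_iff, Finset.mem_insert]
      constructor
      · intro h; exact ⟨h a (Or.inl rfl), fun g hg => h g (Or.inr hg)⟩
      · rintro ⟨h1, h2⟩ g (rfl | hg)
        exacts [h1, h2 g hg]
    rw [hsplit, hCa, hC]
    ext x
    simp only [Set.mem_inter_iff, Set.mem_iUnion, Finset.mem_image, Finset.mem_product,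
      exists_prop, Prod.exists]
    constructor
    · rintro ⟨⟨c1, hc1, hx1⟩, ⟨c2, hc2, hx2⟩⟩
      refine ⟨c1 ⊓ c2, ⟨c1, c2, ⟨hc1, hc2⟩, rfl⟩, ?_⟩
      rw [← box_inter]; exact ⟨hx1, hx2⟩
    · rintro ⟨c, ⟨c1, c2, ⟨hc1, hc2⟩, rfl⟩, hx⟩
      rw [← box_inter] at hx
      exact ⟨⟨c1, hc1, hx.1⟩, ⟨c2, hc2, hx.2⟩⟩

/-- from `List.Forall₂` extract pointwise witnesses -/
lemma forall₂_exists {α : Type*} {r : α → α → Prop} :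
    ∀ {l1 l2 : List α}, List.Forall₂ r l1 l2 → ∀ x ∈ l1, ∃ y ∈ l2, r x y := by
  intro l1 l2 h
  induction h with
  | nil => intro x hx; simp at hx
  | cons hr _ ih =>
    intro x hx
    rcases List.mem_cons.1 hx with rfl | hx'
    · exact ⟨_, List.mem_cons_self, hr⟩
    · obtain ⟨y, hy, hry⟩ := ih x hx'
      exact ⟨y, List.mem_cons_of_mem _ hy, hry⟩

/-- Higman-based: any sequence of corner finsets has a Hoare-dominated pair -/
lemma exists_hoare_pair (S : ℕ → Finset (ι → WithTop ℕ)) :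
    ∃ m n, m < n ∧ ∀ c ∈ S m, ∃ c' ∈ S n, c ≤ c' := by
  have hpwo : (Set.univ : Set (ι → WithTop ℕ)).IsPWO :=
    Set.isPWO_of_wellQuasiOrderedLE Set.univ
  have h2 := Set.PartiallyWellOrderedOn.partiallyWellOrderedOn_sublistForall₂
    (· ≤ · : (ι → WithTop ℕ) → (ι → WithTop ℕ) → Prop) hpwo
  obtain ⟨m, n, hmn, hrel⟩ := h2 (fun m => ⟨(S m).toList, fun x _ => Set.mem_univ x⟩)
  obtain ⟨l, hl, hsub⟩ := List.sublistForall₂_iff.1 hrel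
  refine ⟨m, n, hmn, fun c hc => ?_⟩
  obtain ⟨y, hy, hcy⟩ := forall₂_exists hl c (by simpa using hc)
  exact ⟨y, by simpa using hsub.subset hy, hcy⟩

end Boxes

/-! ### Decompositions of vectors into bounded types -/

def norm1 {d : ℕ} (v : Fin d → ℤ) : ℕ := ∑ j, (v j).toNat

section

variable (d Δ : ℕ)

/-- index type for "types" (bounded nonneg vectors) -/
abbrev Idx := Fin d → Fin (Δ+1)

def vec (f : Idx d Δ) : Fin d → ℤ := fun j => ((f j : ℕ) : ℤ)

/-- count vectors -/
abbrev Cnt := Idx d Δ → ℕ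

noncomputable def vsum (x : Cnt d Δ) : Fin d → ℤ :=
  fun j => ∑ f : Idx d Δ, (x f : ℤ) * vec d Δ f j

def Decomp (v : Fin d → ℤ) : Set (Cnt d Δ) :=
  {x | vsum d Δ x = v ∧ ∀ f, vec d Δ f = 0 → x f = 0}

def Bad : Set (Fin d → ℤ) :=
  {v | v ≠ 0 ∧ (∀ j, 0 ≤ v j) ∧ ∀ v', v' ≠ 0 → v' ≠ v →
    ∃ x ∈ Decomp d Δ v, ¬ ∃ y, y ≤ x ∧ y ∈ Decomp d Δ v'}

variable {d Δ}

lemma vec_injective : Function.Injective (vec d Δ) := by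
  intro f g h
  funext j
  have := congrFun h j
  simp only [vec, Int.ofNat_inj] at this
  exact Fin.ext (by exact_mod_cast this)

lemma vec_nonneg (f : Idx d Δ) (j : Fin d) : 0 ≤ vec d Δ f j := by
  simp [vec]

lemma vsum_nonneg (x : Cnt d Δ) (j : Fin d) : 0 ≤ vsum d Δ x j :=
  Finset.sum_nonneg fun f _ => mul_nonneg (by positivity) (vec_nonneg f j)

lemma vsum_mono {x y : Cnt d Δ} (h : y ≤ x) (j : Fin d) : vsum d Δ y j ≤ vsum d Δ x j :=
  Finset.sum_le_sum fun f _ => mul_le_mul_of_nonneg_right (by exact_mod_cast h f) (vec_nonneg f j)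

lemma norm1_lt_norm1 {v w : Fin d → ℤ} (hv : ∀ j, 0 ≤ v j) (h : ∀ j, v j ≤ w j)
    (hne : v ≠ w) : norm1 v < norm1 w := by
  obtain ⟨j0, hj0⟩ : ∃ j, v j ≠ w j := by
    by_contra hc; push_neg at hc; exact hne (funext hc)
  have hlt : (v j0).toNat < (w j0).toNat := by
    have h1 : v j0 < w j0 := lt_of_le_of_ne (h j0) hj0
    have := hv j0
    omega
  exact Finset.sum_lt_sum (fun j _ => Int.toNat_le_toNat (h j)) ⟨j0, Finset.mem_univ _, hlt⟩

lemma norm1_pos {v : Fin d → ℤ} (hv : ∀ j, 0 ≤ v j) (hne : v ≠ 0) : 1 ≤ norm1 v := by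
  obtain ⟨j0, hj0⟩ : ∃ j, v j ≠ 0 := by
    by_contra hc; push_neg at hc; exact hne (funext hc)
  have : 1 ≤ (v j0).toNat := by have := hv j0; omega
  calc 1 ≤ (v j0).toNat := this
    _ ≤ _ := Finset.single_le_sum (f := fun j => (v j).toNat) (fun j _ => Nat.zero_le _)
        (Finset.mem_univ j0)

/-- if `x` is a decomposition of `v` then each count is at most `norm1 v` -/
lemma count_le_of_mem_decomp {v : Fin d → ℤ} {x : Cnt d Δ} (hx : x ∈ Decomp d Δ v)
    (f : Idx d Δ) : x f ≤ norm1 v := by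
  rcases Nat.eq_zero_or_pos (x f) with h0 | hpos
  · omega
  · have hvf : vec d Δ f ≠ 0 := by
      intro hc
      have := hx.2 f hc; omega
    obtain ⟨j0, hj0⟩ : ∃ j, vec d Δ f j ≠ 0 := by
      by_contra hc; push_neg at hc; exact hvf (funext hc)
    have h1 : (1 : ℤ) ≤ vec d Δ f j0 := by
      have := vec_nonneg f j0; omega
    have hle : (x f : ℤ) ≤ vsum d Δ x j0 := by
      calc (x f : ℤ) = (x f : ℤ) * 1 := by ring
        _ ≤ (x f : ℤ) * vec d Δ f j0 := by
            apply mul_le_mul_of_nonneg_left h1 (by positivity)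
        _ ≤ vsum d Δ x j0 := by
            apply Finset.single_le_sum (f := fun g => ((x g : ℤ) * vec d Δ g j0))
              (fun g _ => mul_nonneg (by positivity) (vec_nonneg g j0)) (Finset.mem_univ f)
    have hsum : vsum d Δ x j0 = v j0 := congrFun hx.1 j0
    have : (x f : ℤ) ≤ v j0 := hsum ▸ hle
    have h2 : x f ≤ (v j0).toNat := by omega
    calc x f ≤ (v j0).toNat := h2
      _ ≤ norm1 v := Finset.single_le_sum (f := fun j => (v j).toNat)
          (fun j _ => Nat.zero_le _) (Finset.mem_univ j0)

lemma decomp_finite (v : Fin d → ℤ) : (Decomp d Δ v).Finite := by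
  apply Set.Finite.subset (Set.Finite.pi (t := fun _ : Idx d Δ => Set.Iic (norm1 v))
    (fun _ => Set.finite_Iic _))
  intro x hx
  simp only [Set.mem_pi, Set.mem_univ, Set.mem_Iic, forall_true_left]
  exact fun f => count_le_of_mem_decomp hx f

end

/-! ### Finiteness of the set of bad vectors -/

lemma bad_finite (d Δ : ℕ) : (Bad d Δ).Finite := by
  classical
  rw [← Set.not_infinite]
  intro hinf
  have e := hinf.natEmbedding
  set v : ℕ → (Fin d → ℤ) := fun m => (e m).1 with hv
  have hC : ∀ m : ℕ, ∃ C : Finset (Idx d Δ → WithTop ℕ),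
      {x : Cnt d Δ | ∀ g ∈ (decomp_finite (v m)).toFinset, ¬ g ≤ x} = ⋃ c ∈ C, box c :=
    fun m => avoid_decomp _
  choose C hCspec using hC
  obtain ⟨m, n, hmn, hhoare⟩ := exists_hoare_pair C
  have hvne : v m ≠ v n := by
    intro h
    have : e m = e n := Subtype.ext h
    exact (Nat.ne_of_lt hmn) (e.injective this)
  have hbadn := (e n).2
  obtain ⟨x, hxDec, hxav⟩ := hbadn.2.2 (v m) (e m).2.1 hvne
  by_cases hxm : ∃ g ∈ Decomp d Δ (v m), g ≤ x
  · obtain ⟨g, hg1, hg2⟩ := hxm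
    exact hxav ⟨g, hg2, hg1⟩
  · have hx1 : x ∈ {x : Cnt d Δ | ∀ g ∈ (decomp_finite (v m)).toFinset, ¬ g ≤ x} := by
      intro g hg hle
      exact hxm ⟨g, (Set.Finite.mem_toFinset _).1 hg, hle⟩
    rw [hCspec m] at hx1
    obtain ⟨c, hc, hxc⟩ := by simpa only [Set.mem_iUnion, exists_prop] using hx1
    obtain ⟨c', hc', hcc'⟩ := hhoare c hc
    have hx2 : x ∈ {x : Cnt d Δ | ∀ g ∈ (decomp_finite (v n)).toFinset, ¬ g ≤ x} := by
      rw [hCspec n]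
      exact Set.mem_iUnion₂.2 ⟨c', hc', box_mono hcc' hxc⟩
    exact hx2 x ((Set.Finite.mem_toFinset _).2 hxDec) le_rfl

lemma exists_bound (d Δ : ℕ) : ∃ N : ℕ, ∀ v ∈ Bad d Δ, norm1 v ≤ N := by
  obtain ⟨N, hNub⟩ := ((bad_finite d Δ).image norm1).bddAbove
  exact ⟨N, fun v hv => hNub (Set.mem_image_of_mem _ hv)⟩

/-! ### Multiset conversions -/

open Multiset

section

variable {d Δ : ℕ}

/-- elements are valid nonzero types -/
def TY (Δ : ℕ) (M : Multiset (Fin d → ℤ)) : Prop :=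
  ∀ τ ∈ M, (∀ j, 0 ≤ τ j ∧ τ j ≤ (Δ : ℤ)) ∧ τ ≠ 0

def toX (d Δ : ℕ) (M : Multiset (Fin d → ℤ)) : Cnt d Δ :=
  fun f => M.count (vec d Δ f)

lemma exists_idx {τ : Fin d → ℤ} (h : ∀ j, 0 ≤ τ j ∧ τ j ≤ (Δ : ℤ)) :
    ∃ f : Idx d Δ, vec d Δ f = τ := by
  refine ⟨fun j => ⟨(τ j).toNat, ?_⟩, ?_⟩
  · have := h j; omega
  · funext j
    have := (h j).1
    simp only [vec]
    omega

lemma vsum_toX (M : Multiset (Fin d → ℤ)) (hM : TY Δ M) :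
    vsum d Δ (toX d Δ M) = M.sum := by
  induction M using Multiset.induction_on with
  | empty => funext j; simp [vsum, toX]
  | cons τ M ih =>
    have hτ := hM τ (mem_cons_self τ M)
    have hM' : TY Δ M := fun a ha => hM a (mem_cons_of_mem ha)
    obtain ⟨f₀, hf₀⟩ := exists_idx hτ.1
    funext j
    have hih := congrFun (ih hM') j
    simp only [vsum, toX] at hih ⊢
    have key : ∀ f : Idx d Δ, (count (vec d Δ f) (τ ::ₘ M) : ℤ) * vec d Δ f j
        = (count (vec d Δ f) M : ℤ) * vec d Δ f j + (if f = f₀ then vec d Δ f j else 0) := by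
      intro f
      by_cases hf : f = f₀
      · subst hf
        rw [if_pos rfl, count_cons, if_pos hf₀]
        push_cast; ring
      · rw [if_neg hf, count_cons, if_neg (fun h => hf (vec_injective (h.trans hf₀.symm)))]
        push_cast; ring
    rw [Finset.sum_congr rfl (fun f _ => key f), Finset.sum_add_distrib,
      Finset.sum_ite_eq' Finset.univ f₀ (fun f => vec d Δ f j), if_pos (Finset.mem_univ f₀),
      hih, sum_cons, Pi.add_apply, ← hf₀]
    ring

lemma toX_mem_nonzero (M : Multiset (Fin d → ℤ)) (hM : TY Δ M) (f : Idx d Δ)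
    (hf : vec d Δ f = 0) : toX d Δ M f = 0 := by
  rw [toX, count_eq_zero]
  intro hmem
  exact (hM _ hmem).2 (hf ▸ rfl)

noncomputable def ofX (d Δ : ℕ) (y : Cnt d Δ) : Multiset (Fin d → ℤ) :=
  ∑ f : Idx d Δ, (y f) • ({vec d Δ f} : Multiset (Fin d → ℤ))

lemma count_ofX (y : Cnt d Δ) (f₀ : Idx d Δ) :
    count (vec d Δ f₀) (ofX d Δ y) = y f₀ := by
  rw [ofX, count_sum']
  have key : ∀ f : Idx d Δ, count (vec d Δ f₀) (y f • {vec d Δ f})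
      = if f = f₀ then y f else 0 := by
    intro f
    rw [count_nsmul, count_singleton]
    by_cases hf : f = f₀
    · subst hf; simp
    · rw [if_neg (fun h => hf (vec_injective h.symm)), if_neg hf]; ring
  rw [Finset.sum_congr rfl (fun f _ => key f),
    Finset.sum_ite_eq' Finset.univ f₀ (fun f => y f), if_pos (Finset.mem_univ f₀)]

lemma count_ofX_notin (y : Cnt d Δ) (a : Fin d → ℤ) (ha : ∀ f, vec d Δ f ≠ a) :
    count a (ofX d Δ y) = 0 := by
  rw [ofX, count_sum']
  apply Finset.sum_eq_zero
  intro f _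
  rw [count_nsmul, count_singleton, if_neg (fun h => ha f h.symm)]
  ring

lemma ofX_le {y : Cnt d Δ} {M : Multiset (Fin d → ℤ)} (h : y ≤ toX d Δ M) :
    ofX d Δ y ≤ M := by
  classical
  rw [le_iff_count]
  intro a
  by_cases ha : ∃ f, vec d Δ f = a
  · obtain ⟨f, rfl⟩ := ha
    rw [count_ofX]
    exact h f
  · push_neg at ha
    rw [count_ofX_notin _ _ ha]
    exact Nat.zero_le _

lemma sum_ofX (y : Cnt d Δ) : (ofX d Δ y).sum = vsum d Δ y := by
  rw [ofX]
  rw [show (∑ f : Idx d Δ, (y f) • ({vec d Δ f} : Multiset (Fin d → ℤ))).sum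
      = ∑ f : Idx d Δ, ((y f) • ({vec d Δ f} : Multiset (Fin d → ℤ))).sum from
    map_sum Multiset.sumAddMonoidHom _ Finset.univ]
  funext j
  rw [Finset.sum_apply]
  unfold vsum
  apply Finset.sum_congr rfl
  intro f _
  rw [nsmul_singleton, sum_replicate]
  simp [nsmul_eq_mul]

lemma card_finset_sum {β : Type*} (s : Finset β) (m : β → Multiset (Fin d → ℤ)) :
    Multiset.card (∑ i ∈ s, m i) = ∑ i ∈ s, Multiset.card (m i) := by
  classical
  induction s using Finset.induction_on with
  | empty => simp
  | @insert a s ha ih => rw [Finset.sum_insert ha, Finset.sum_insert ha, Multiset.card_add, ih]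

lemma card_ofX (y : Cnt d Δ) : Multiset.card (ofX d Δ y) = ∑ f, y f := by
  rw [ofX, card_finset_sum]
  apply Finset.sum_congr rfl
  intro f _
  rw [nsmul_singleton, card_replicate]

lemma TY_ofX (y : Cnt d Δ) (h0 : ∀ f, vec d Δ f = 0 → y f = 0) : TY Δ (ofX d Δ y) := by
  intro τ hmem
  rw [ofX, mem_sum] at hmem
  obtain ⟨f, _, hτ⟩ := hmem
  rw [nsmul_singleton, eq_comm.mp (rfl : replicate (y f) (vec d Δ f) = _)] at hτ
  rw [mem_replicate] at hτ
  obtain ⟨hyf, rfl⟩ := hτ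
  refine ⟨fun j => ⟨by simp [vec], by simp only [vec, Int.ofNat_le]; exact_mod_cast Fin.is_le _⟩, ?_⟩
  intro hc
  exact hyf (h0 f hc)

lemma sum_counts_le (y : Cnt d Δ) (h0 : ∀ f, vec d Δ f = 0 → y f = 0) :
    (∑ f, y f) ≤ norm1 (vsum d Δ y) := by
  have h1 : ∀ j, (vsum d Δ y j).toNat = ∑ f, y f * (f j : ℕ) := by
    intro j
    have : vsum d Δ y j = ((∑ f, y f * (f j : ℕ) : ℕ) : ℤ) := by
      unfold vsum vec
      push_cast
      rfl
    rw [this, Int.toNat_natCast]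
  have h2 : norm1 (vsum d Δ y) = ∑ f, y f * (∑ j, (f j : ℕ)) := by
    unfold norm1
    rw [Finset.sum_congr rfl (fun j _ => h1 j), Finset.sum_comm]
    apply Finset.sum_congr rfl
    intro f _
    rw [Finset.mul_sum]
  rw [h2]
  apply Finset.sum_le_sum
  intro f _
  rcases Nat.eq_zero_or_pos (y f) with hy | hy
  · simp [hy]
  · have hvf : vec d Δ f ≠ 0 := by
      intro hc
      rw [h0 f hc] at hy; exact lt_irrefl 0 hy
    have : ∃ j, (f j : ℕ) ≠ 0 := by
      by_contra hc
      push_neg at hc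
      apply hvf
      funext j
      simp [vec, hc j]
    obtain ⟨j₀, hj₀⟩ := this
    have : 1 ≤ ∑ j, (f j : ℕ) := by
      calc 1 ≤ (f j₀ : ℕ) := Nat.one_le_iff_ne_zero.mpr hj₀
        _ ≤ _ := Finset.single_le_sum (f := fun j => (f j : ℕ)) (fun _ _ => Nat.zero_le _)
            (Finset.mem_univ j₀)
    exact Nat.le_mul_of_pos_right _ (lt_of_lt_of_le Nat.zero_lt_one this)

lemma card_ofX_le (y : Cnt d Δ) (h0 : ∀ f, vec d Δ f = 0 → y f = 0) :
    Multiset.card (ofX d Δ y) ≤ norm1 (vsum d Δ y) := by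
  rw [card_ofX]
  exact sum_counts_le y h0

/-! ### norm bounds for multisets of types -/

lemma sum_TY_nonneg {M : Multiset (Fin d → ℤ)} (hM : TY Δ M) (j : Fin d) : 0 ≤ M.sum j := by
  induction M using Multiset.induction_on with
  | empty => simp
  | cons τ M ih =>
    have hτ := (hM τ (mem_cons_self τ M)).1 j
    have hM' : TY Δ M := fun a ha => hM a (mem_cons_of_mem ha)
    rw [sum_cons, Pi.add_apply]
    have := ih hM'
    omega

lemma card_le_norm1 {M : Multiset (Fin d → ℤ)} (hM : TY Δ M) :
    Multiset.card M ≤ norm1 M.sum := by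
  induction M using Multiset.induction_on with
  | empty => simp [norm1]
  | cons τ M ih =>
    have hτ := hM τ (mem_cons_self τ M)
    have hM' : TY Δ M := fun a ha => hM a (mem_cons_of_mem ha)
    have hadd : norm1 (τ ::ₘ M).sum = norm1 τ + norm1 M.sum := by
      rw [sum_cons]
      unfold norm1
      rw [← Finset.sum_add_distrib]
      apply Finset.sum_congr rfl
      intro j _
      have h1 := hτ.1 j
      have h2 := sum_TY_nonneg hM' j
      rw [Pi.add_apply]
      omega
    rw [card_cons, hadd]
    have h1 : 1 ≤ norm1 τ := norm1_pos (fun j => (hτ.1 j).1) hτ.2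
    have h2 := ih hM'
    omega

/-! ### The recursion -/

lemma rec_main (d Δ N : ℕ) (hN : ∀ v ∈ Bad d Δ, norm1 v ≤ N) :
    ∀ (k : ℕ) (σ : Fin d → ℤ), norm1 σ ≤ k → σ ≠ 0 → (∀ j, 0 ≤ σ j) →
    ∀ (n : ℕ) (T : Fin n → Multiset (Fin d → ℤ)),
      (∀ i, TY Δ (T i)) → (∀ i, (T i).sum = σ) →
      ∃ (σ' : Fin d → ℤ) (S : Fin n → Multiset (Fin d → ℤ)), σ' ≠ 0 ∧
        ∀ i, S i ≤ T i ∧ (S i).sum = σ' ∧ Multiset.card (S i) ≤ N := by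
  intro k
  induction k with
  | zero =>
    intro σ h0 hσ0 hσnn n T hTY hsum
    exact absurd (norm1_pos hσnn hσ0) (by omega)
  | succ k ih =>
    intro σ hk hσ0 hσnn n T hTY hsum
    by_cases hbase : norm1 σ ≤ N
    · refine ⟨σ, T, hσ0, fun i => ⟨le_rfl, hsum i, ?_⟩⟩
      have hcard : Multiset.card (T i) ≤ norm1 σ := by
        rw [← hsum i]; exact card_le_norm1 (hTY i)
      omega
    · have hnb : σ ∉ Bad d Δ := fun hmem => hbase (hN σ hmem)
      have h3 : ¬ ∀ v', v' ≠ 0 → v' ≠ σ →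
          ∃ x ∈ Decomp d Δ σ, ¬ ∃ y, y ≤ x ∧ y ∈ Decomp d Δ v' :=
        fun hP => hnb ⟨hσ0, hσnn, hP⟩
      push_neg at h3
      obtain ⟨v', hv'0, hv'ne, hv'⟩ := h3
      rcases Nat.eq_zero_or_pos n with rfl | hn
      · exact ⟨σ, fun _ => 0, hσ0, fun i => i.elim0⟩
      have hxdec : ∀ i, toX d Δ (T i) ∈ Decomp d Δ σ := by
        intro i
        exact ⟨by rw [vsum_toX _ (hTY i), hsum i],
          fun f hf => toX_mem_nonzero _ (hTY i) f hf⟩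
      have hy : ∀ i, ∃ y, y ≤ toX d Δ (T i) ∧ y ∈ Decomp d Δ v' := fun i => hv' _ (hxdec i)
      choose y hy1 hy2 using hy
      have hi₀ : (0 : ℕ) < n := hn
      set i₀ : Fin n := ⟨0, hi₀⟩
      have hv'nn : ∀ j, 0 ≤ v' j := by
        intro j
        rw [← (hy2 i₀).1]
        exact vsum_nonneg _ j
      have hv'le : ∀ j, v' j ≤ σ j := by
        intro j
        have h4 := (hxdec i₀).1
        rw [← (hy2 i₀).1, ← h4]
        exact vsum_mono (hy1 i₀) j
      have hlt : norm1 v' < norm1 σ := norm1_lt_norm1 hv'nn hv'le hv'ne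
      have hk' : norm1 v' ≤ k := by omega
      have hYTY : ∀ i, TY Δ (ofX d Δ (y i)) := fun i => TY_ofX _ (fun f hf => (hy2 i).2 f hf)
      have hYsum : ∀ i, (ofX d Δ (y i)).sum = v' := fun i => (sum_ofX (y i)).trans (hy2 i).1
      obtain ⟨σ', S, hσ'0, hS⟩ := ih v' hk' hv'0 hv'nn n (fun i => ofX d Δ (y i)) hYTY hYsum
      exact ⟨σ', S, hσ'0, fun i =>
        ⟨le_trans (hS i).1 (ofX_le (hy1 i)), (hS i).2.1, (hS i).2.2⟩⟩

end

end Stmt0Aux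

theorem stmt0 :
    ∃ f : ℕ → ℕ → ℕ, ∀ (d Δ n : ℕ) (T : Fin n → Multiset (Fin d → ℤ)),
      (∀ i, ∀ τ ∈ T i, ∀ j, 0 ≤ τ j ∧ |τ j| ≤ (Δ : ℤ)) →
      (∀ i i', (T i).sum = (T i').sum) →
      (∀ i, (T i).sum ≠ 0) →
      ∃ S : Fin n → Multiset (Fin d → ℤ),
        (∀ i, S i ≤ T i ∧ S i ≠ 0 ∧ Multiset.card (S i) ≤ f d Δ) ∧
        (∀ i i', (S i).sum = (S i').sum) := by
  classical
  have key : ∀ d Δ : ℕ, ∃ N : ℕ, ∀ (n : ℕ) (T : Fin n → Multiset (Fin d → ℤ)),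
      (∀ i, ∀ τ ∈ T i, ∀ j, 0 ≤ τ j ∧ |τ j| ≤ (Δ : ℤ)) →
      (∀ i i', (T i).sum = (T i').sum) →
      (∀ i, (T i).sum ≠ 0) →
      ∃ S : Fin n → Multiset (Fin d → ℤ),
        (∀ i, S i ≤ T i ∧ S i ≠ 0 ∧ Multiset.card (S i) ≤ N) ∧
        (∀ i i', (S i).sum = (S i').sum) := by
    intro d Δ
    obtain ⟨N, hN⟩ := Stmt0Aux.exists_bound d Δ
    refine ⟨N, ?_⟩
    intro n T hbound hsums hnz
    rcases Nat.eq_zero_or_pos n with rfl | hn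
    · exact ⟨fun _ => 0, fun i => i.elim0, fun i => i.elim0⟩
    set i₀ : Fin n := ⟨0, hn⟩
    set T' : Fin n → Multiset (Fin d → ℤ) := fun i => (T i).filter (fun τ => τ ≠ 0) with hT'
    have hfil : ∀ i, (T' i).sum = (T i).sum := by
      intro i
      have hsplit := Multiset.filter_add_not (fun τ => τ ≠ 0) (T i)
      have hzero : ((T i).filter (fun τ => ¬ τ ≠ 0)).sum = 0 := by
        apply Multiset.sum_eq_zero
        intro τ hτ
        have := Multiset.of_mem_filter hτ
        simpa using this
      calc (T' i).sum = (T' i).sum + ((T i).filter (fun τ => ¬ τ ≠ 0)).sum := by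
            rw [hzero, add_zero]
        _ = (T i).sum := by rw [← Multiset.sum_add, hsplit]
    have hTY : ∀ i, Stmt0Aux.TY Δ (T' i) := by
      intro i τ hτ
      have hmem := Multiset.mem_of_mem_filter hτ
      have hne := Multiset.of_mem_filter hτ
      refine ⟨fun j => ⟨(hbound i τ hmem j).1, ?_⟩, by simpa using hne⟩
      have h2 := (hbound i τ hmem j).2
      have h1 := (hbound i τ hmem j).1
      rwa [abs_of_nonneg h1] at h2
    have hσnn : ∀ j, 0 ≤ (T i₀).sum j := by
      intro j
      rw [← hfil i₀]
      exact Stmt0Aux.sum_TY_nonneg (hTY i₀) j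
    obtain ⟨σ', S, hσ'0, hS⟩ := Stmt0Aux.rec_main d Δ N hN (Stmt0Aux.norm1 ((T i₀).sum))
      ((T i₀).sum) le_rfl (hnz i₀) hσnn n T' hTY (fun i => (hfil i).trans (hsums i i₀))
    refine ⟨S, fun i => ⟨le_trans (hS i).1 (Multiset.filter_le _ _), ?_, (hS i).2.2⟩,
      fun i i' => ((hS i).2.1).trans ((hS i').2.1).symm⟩
    intro hzero
    apply hσ'0
    rw [← (hS i).2.1, hzero, Multiset.sum_zero]
  choose f hf using key
  exact ⟨f, fun d Δ => hf d Δ⟩
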